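/- arXiv:1808.00445 — 2 statements merged into one kernel-verified Lean document; each statement's English description precedes it below -/
import Mathlib

section
/- Every perfect matching M of {1,...,2n} can be transformed into a noncrossing matching by finitely many uncrossing moves, each replacing a crossing pair {a,c},{b,d} (a<b<c<d) by either {a,b},{c,d} or {a,d},{b,c}; i.e., the uncrossing process terminates, since each such replacement strictly decreases the number of crossing pairs. -/
open MvPolynomial Finset

noncomputable section

/-- The polynomial ring ℂ[x_{ij}] for a 2 × (2n) matrix of indeterminates. -/
abbrev PolyR (n : ℕ) := MvPolynomial (Fin 2 × Fin (2 * n)) ℂ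

/-- The 2×2 minor Δ_{ab} = x_{1a} x_{2b} - x_{1b} x_{2a} (rows 0,1 in 0-indexing). -/
def Delta {n : ℕ} (a b : Fin (2 * n)) : PolyR n :=
  X (0, a) * X (1, b) - X (0, b) * X (1, a)

/-- A perfect matching on {1,…,2n}, encoded as a fixed-point-free involution. -/
structure PM (n : ℕ) where
  f : Fin (2 * n) → Fin (2 * n)
  invol : ∀ i, f (f i) = i
  nofix : ∀ i, f i ≠ i

/-- The product Δ_M of the minors over the blocks of a perfect matching M. -/
def DeltaM {n : ℕ} (M : PM n) : PolyR n :=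
  ∏ i ∈ Finset.univ.filter (fun i => i < M.f i), Delta i (M.f i)

/-- M is noncrossing: no a < b < c < d with a ∼ c and b ∼ d. -/
def Noncrossing {n : ℕ} (M : PM n) : Prop :=
  ¬ ∃ a b c d : Fin (2 * n), a < b ∧ b < c ∧ c < d ∧ M.f a = c ∧ M.f b = d

/-- The number of crossing pairs a < b < c < d with a ∼ c, b ∼ d in M. -/
def crossings {n : ℕ} (M : PM n) : ℕ :=
  ((Finset.univ : Finset (Fin (2 * n) × Fin (2 * n))).filter
    (fun p => p.1 < p.2 ∧ p.2 < M.f p.1 ∧ M.f p.1 < M.f p.2)).card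

/-- One uncrossing move: replace a crossing pair {a,c},{b,d} (a<b<c<d) by
{a,b},{c,d} or by {a,d},{b,c}, leaving all other blocks unchanged. -/
def UncrossStep {n : ℕ} (M M' : PM n) : Prop :=
  ∃ a b c d : Fin (2 * n), a < b ∧ b < c ∧ c < d ∧ M.f a = c ∧ M.f b = d ∧
    (∀ k, k ≠ a → k ≠ b → k ≠ c → k ≠ d → M'.f k = M.f k) ∧
    ((M'.f a = b ∧ M'.f c = d) ∨ (M'.f a = d ∧ M'.f b = c))

section Aux

variable {n : ℕ}

def crossCh (s t x y : Fin (2 * n)) : Prop :=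
  (s < x ∧ x < t ∧ t < y) ∨ (x < s ∧ s < y ∧ y < t)

instance (s t x y : Fin (2 * n)) : Decidable (crossCh s t x y) := by
  unfold crossCh; infer_instance

def sort2 (u v : Fin (2 * n)) : Fin (2 * n) × Fin (2 * n) :=
  if u < v then (u, v) else (v, u)

lemma sort2_cases (u v : Fin (2 * n)) : sort2 u v = (u, v) ∨ sort2 u v = (v, u) := by
  unfold sort2; split <;> simp

def rAC (M : PM n) (a b c : Fin (2 * n)) (x : Fin (2 * n)) : Fin (2 * n) :=
  if crossCh a c x (M.f x) then a else b

def rBD (M : PM n) (a b d : Fin (2 * n)) (x : Fin (2 * n)) : Fin (2 * n) :=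
  if crossCh b d x (M.f x) then b else a

lemma rAC_mem (M : PM n) (a b c x : Fin (2 * n)) :
    rAC M a b c x = a ∨ rAC M a b c x = b := by unfold rAC; split <;> simp

lemma rBD_mem (M : PM n) (a b d x : Fin (2 * n)) :
    rBD M a b d x = b ∨ rBD M a b d x = a := by unfold rBD; split <;> simp

def phi (M : PM n) (a b c d u1 u2 : Fin (2 * n))
    (p : Fin (2 * n) × Fin (2 * n)) : Fin (2 * n) × Fin (2 * n) :=
  if p.1 = u1 then sort2 (rAC M a b c p.2) p.2
  else if p.1 = u2 then sort2 (rBD M a b d p.2) p.2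
  else if p.2 = u1 then sort2 (rAC M a b c p.1) p.1
  else if p.2 = u2 then sort2 (rBD M a b d p.1) p.1
  else p

lemma crossings_decrease (M M' : PM n) (a b c d u1 v1 u2 v2 : Fin (2 * n))
    (hab : a < b) (hbc : b < c) (hcd : c < d)
    (hMa : M.f a = c) (hMb : M.f b = d)
    (hmem : ∀ k : Fin (2 * n), (k = u1 ∨ k = v1 ∨ k = u2 ∨ k = v2) ↔
      (k = a ∨ k = b ∨ k = c ∨ k = d))
    (hu1v1 : u1 < v1) (hu2v2 : u2 < v2) (h12 : u1 < u2)
    (hM'1 : M'.f u1 = v1) (hM'2 : M'.f u2 = v2)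
    (hoth : ∀ k, k ≠ a → k ≠ b → k ≠ c → k ≠ d → M'.f k = M.f k)
    (hnocross : ¬ crossCh u1 v1 u2 v2)
    (hA : ∀ x y : Fin (2 * n), x < y → x ≠ a → x ≠ b → x ≠ c → x ≠ d →
        y ≠ a → y ≠ b → y ≠ c → y ≠ d →
        crossCh u1 v1 x y → crossCh a c x y ∨ crossCh b d x y)
    (hB : ∀ x y : Fin (2 * n), x < y → x ≠ a → x ≠ b → x ≠ c → x ≠ d →
        y ≠ a → y ≠ b → y ≠ c → y ≠ d →
        crossCh u2 v2 x y → crossCh a c x y ∨ crossCh b d x y)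
    (hC : ∀ x y : Fin (2 * n), x < y → x ≠ a → x ≠ b → x ≠ c → x ≠ d →
        y ≠ a → y ≠ b → y ≠ c → y ≠ d →
        crossCh u1 v1 x y → crossCh u2 v2 x y →
        crossCh a c x y ∧ crossCh b d x y) :
    crossings M' < crossings M := by
  classical
  unfold crossings
  set S : Finset (Fin (2 * n) × Fin (2 * n)) :=
    Finset.univ.filter (fun p => p.1 < p.2 ∧ p.2 < M.f p.1 ∧ M.f p.1 < M.f p.2) with hS
  set S' : Finset (Fin (2 * n) × Fin (2 * n)) :=
    Finset.univ.filter (fun p => p.1 < p.2 ∧ p.2 < M'.f p.1 ∧ M'.f p.1 < M'.f p.2) with hS'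
  have hfc : M.f c = a := by rw [← hMa]; exact M.invol a
  have hfd : M.f d = b := by rw [← hMb]; exact M.invol b
  have hM'v1 : M'.f v1 = u1 := by rw [← hM'1]; exact M'.invol u1
  have hM'v2 : M'.f v2 = u2 := by rw [← hM'2]; exact M'.invol u2
  have hGoodf : ∀ k : Fin (2 * n), k ≠ a → k ≠ b → k ≠ c → k ≠ d →
      M.f k ≠ a ∧ M.f k ≠ b ∧ M.f k ≠ c ∧ M.f k ≠ d := by
    intro k ha hb hc hd
    refine ⟨?_, ?_, ?_, ?_⟩ <;> intro h <;>
      [skip; skip; skip; skip]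
    · have := M.invol k; rw [h, hMa] at this; exact hc this.symm
    · have := M.invol k; rw [h, hMb] at this; exact hd this.symm
    · have := M.invol k; rw [h, hfc] at this; exact ha this.symm
    · have := M.invol k; rw [h, hfd] at this; exact hb this.symm
  have hGood_ne : ∀ k : Fin (2 * n), (k ≠ a ∧ k ≠ b ∧ k ≠ c ∧ k ≠ d) →
      k ≠ u1 ∧ k ≠ u2 := by
    intro k hk
    constructor
    · intro h
      rcases (hmem k).mp (Or.inl h) with h' | h' | h' | h' <;> tauto
    · intro h
      rcases (hmem k).mp (Or.inr (Or.inr (Or.inl h))) with h' | h' | h' | h' <;> tauto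
  have hopener : ∀ k : Fin (2 * n), k < M'.f k →
      k = u1 ∨ k = u2 ∨ (k ≠ a ∧ k ≠ b ∧ k ≠ c ∧ k ≠ d) := by
    intro k hk
    by_cases h1 : k = u1; · exact Or.inl h1
    by_cases h2 : k = u2; · exact Or.inr (Or.inl h2)
    by_cases hv1 : k = v1
    · exfalso; rw [hv1, hM'v1] at hk; exact absurd hk (asymm hu1v1)
    by_cases hv2 : k = v2
    · exfalso; rw [hv2, hM'v2] at hk; exact absurd hk (asymm hu2v2)
    have hk4 : ¬(k = u1 ∨ k = v1 ∨ k = u2 ∨ k = v2) := by tauto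
    have hg : ¬(k = a ∨ k = b ∨ k = c ∨ k = d) := fun h => hk4 ((hmem k).mpr h)
    exact Or.inr (Or.inr (by tauto))
  have memAC : ∀ x : Fin (2 * n), x ≠ a → x ≠ b → x ≠ c → x ≠ d →
      crossCh a c x (M.f x) → sort2 a x ∈ S ∧ sort2 a x ≠ (a, b) := by
    intro x h1 h2 h3 h4 hcr
    rcases hcr with ⟨h5, h6, h7⟩ | ⟨h5, h6, h7⟩
    · have hs : sort2 a x = (a, x) := by unfold sort2; rw [if_pos h5]
      rw [hs]
      refine ⟨?_, ?_⟩
      · rw [hS, Finset.mem_filter]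
        exact ⟨Finset.mem_univ _, h5, by rw [hMa]; exact h6, by rw [hMa]; exact h7⟩
      · intro he; exact h2 (congrArg Prod.snd he)
    · have hs : sort2 a x = (x, a) := by unfold sort2; rw [if_neg (asymm h5)]
      rw [hs]
      refine ⟨?_, ?_⟩
      · rw [hS, Finset.mem_filter]
        exact ⟨Finset.mem_univ _, h5, h6, by rw [hMa]; exact h7⟩
      · intro he; exact h1 (congrArg Prod.fst he)
  have memBD : ∀ x : Fin (2 * n), x ≠ a → x ≠ b → x ≠ c → x ≠ d →
      crossCh b d x (M.f x) → sort2 b x ∈ S ∧ sort2 b x ≠ (a, b) := by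
    intro x h1 h2 h3 h4 hcr
    rcases hcr with ⟨h5, h6, h7⟩ | ⟨h5, h6, h7⟩
    · have hs : sort2 b x = (b, x) := by unfold sort2; rw [if_pos h5]
      rw [hs]
      refine ⟨?_, ?_⟩
      · rw [hS, Finset.mem_filter]
        exact ⟨Finset.mem_univ _, h5, by rw [hMb]; exact h6, by rw [hMb]; exact h7⟩
      · intro he; exact hab.ne' (congrArg Prod.fst he)
    · have hs : sort2 b x = (x, b) := by unfold sort2; rw [if_neg (asymm h5)]
      rw [hs]
      refine ⟨?_, ?_⟩
      · rw [hS, Finset.mem_filter]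
        exact ⟨Finset.mem_univ _, h5, h6, by rw [hMb]; exact h7⟩
      · intro he; exact h1 (congrArg Prod.fst he)
  -- trichotomy
  have tri : ∀ p : Fin (2 * n) × Fin (2 * n), p ∈ S' →
      ((p.1 ≠ a ∧ p.1 ≠ b ∧ p.1 ≠ c ∧ p.1 ≠ d) ∧ (p.2 ≠ a ∧ p.2 ≠ b ∧ p.2 ≠ c ∧ p.2 ≠ d) ∧
        phi M a b c d u1 u2 p = p) ∨
      (∃ x : Fin (2 * n), (x ≠ a ∧ x ≠ b ∧ x ≠ c ∧ x ≠ d) ∧ x < M.f x ∧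
        crossCh u1 v1 x (M.f x) ∧ (p = (u1, x) ∨ p = (x, u1)) ∧
        phi M a b c d u1 u2 p = sort2 (rAC M a b c x) x) ∨
      (∃ x : Fin (2 * n), (x ≠ a ∧ x ≠ b ∧ x ≠ c ∧ x ≠ d) ∧ x < M.f x ∧
        crossCh u2 v2 x (M.f x) ∧ (p = (u2, x) ∨ p = (x, u2)) ∧
        phi M a b c d u1 u2 p = sort2 (rBD M a b d x) x) := by
    intro p hp
    rw [hS', Finset.mem_filter] at hp
    obtain ⟨-, hp1, hp2, hp3⟩ := hp
    have ho1 : p.1 < M'.f p.1 := hp1.trans hp2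
    have ho2 : p.2 < M'.f p.2 := hp2.trans hp3
    rcases hopener p.1 ho1 with h1 | h1 | h1
    · rcases hopener p.2 ho2 with h2 | h2 | h2
      · exfalso; rw [h1, h2] at hp1; exact lt_irrefl _ hp1
      · exfalso
        apply hnocross
        rw [h1, hM'1] at hp2 hp3
        rw [h2, hM'2] at hp3
        rw [h1] at hp1; rw [h2] at hp1 hp2
        exact Or.inl ⟨hp1, hp2, hp3⟩
      · right; left
        have hf2 : M'.f p.2 = M.f p.2 := hoth p.2 h2.1 h2.2.1 h2.2.2.1 h2.2.2.2
        rw [h1, hM'1] at hp2 hp3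
        rw [hf2] at hp3 ho2
        rw [h1] at hp1
        refine ⟨p.2, h2, ho2, Or.inl ⟨hp1, hp2, hp3⟩, Or.inl ?_, ?_⟩
        · rw [Prod.ext_iff]; exact ⟨h1, rfl⟩
        · unfold phi; rw [if_pos h1]
    · rcases hopener p.2 ho2 with h2 | h2 | h2
      · exfalso; rw [h1, h2] at hp1; exact absurd hp1 (asymm h12)
      · exfalso; rw [h1, h2] at hp1; exact lt_irrefl _ hp1
      · right; right
        have hf2 : M'.f p.2 = M.f p.2 := hoth p.2 h2.1 h2.2.1 h2.2.2.1 h2.2.2.2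
        rw [h1, hM'2] at hp2 hp3
        rw [hf2] at hp3 ho2
        rw [h1] at hp1
        have hne1 : p.1 ≠ u1 := by rw [h1]; exact h12.ne'
        refine ⟨p.2, h2, ho2, Or.inl ⟨hp1, hp2, hp3⟩, Or.inl ?_, ?_⟩
        · rw [Prod.ext_iff]; exact ⟨h1, rfl⟩
        · unfold phi; rw [if_neg hne1, if_pos h1]
    · have hne1 := hGood_ne p.1 h1
      have hf1 : M'.f p.1 = M.f p.1 := hoth p.1 h1.1 h1.2.1 h1.2.2.1 h1.2.2.2
      rcases hopener p.2 ho2 with h2 | h2 | h2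
      · right; left
        rw [hf1] at hp2 hp3 ho1
        rw [h2, hM'1] at hp3
        rw [h2] at hp1 hp2
        refine ⟨p.1, h1, ho1, Or.inr ⟨hp1, hp2, hp3⟩, Or.inr ?_, ?_⟩
        · rw [Prod.ext_iff]; exact ⟨rfl, h2⟩
        · unfold phi; rw [if_neg hne1.1, if_neg hne1.2, if_pos h2]
      · right; right
        rw [hf1] at hp2 hp3 ho1
        rw [h2, hM'2] at hp3
        rw [h2] at hp1 hp2
        have hne2 : p.2 ≠ u1 := by rw [h2]; exact h12.ne'
        refine ⟨p.1, h1, ho1, Or.inr ⟨hp1, hp2, hp3⟩, Or.inr ?_, ?_⟩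
        · rw [Prod.ext_iff]; exact ⟨rfl, h2⟩
        · unfold phi; rw [if_neg hne1.1, if_neg hne1.2, if_neg hne2, if_pos h2]
      · left
        have hne2 := hGood_ne p.2 h2
        refine ⟨h1, h2, ?_⟩
        unfold phi; rw [if_neg hne1.1, if_neg hne1.2, if_neg hne2.1, if_neg hne2.2]
  have hmaps : ∀ p ∈ S', phi M a b c d u1 u2 p ∈ S.erase (a, b) := by
    intro p hp
    rcases tri p hp with ⟨h1, h2, he⟩ | ⟨x, hx, hxo, hcr, hpe, he⟩ | ⟨x, hx, hxo, hcr, hpe, he⟩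
    · rw [he, Finset.mem_erase]
      refine ⟨fun hcontra => h1.1 (congrArg Prod.fst hcontra), ?_⟩
      rw [hS', Finset.mem_filter] at hp
      obtain ⟨-, hp1, hp2, hp3⟩ := hp
      rw [hoth p.1 h1.1 h1.2.1 h1.2.2.1 h1.2.2.2] at hp2 hp3
      rw [hoth p.2 h2.1 h2.2.1 h2.2.2.1 h2.2.2.2] at hp3
      rw [hS, Finset.mem_filter]
      exact ⟨Finset.mem_univ _, hp1, hp2, hp3⟩
    · rw [he]
      have hfx := hGoodf x hx.1 hx.2.1 hx.2.2.1 hx.2.2.2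
      by_cases hACx : crossCh a c x (M.f x)
      · have hr : rAC M a b c x = a := by unfold rAC; rw [if_pos hACx]
        rw [hr, Finset.mem_erase]
        have := memAC x hx.1 hx.2.1 hx.2.2.1 hx.2.2.2 hACx
        exact ⟨this.2, this.1⟩
      · have hr : rAC M a b c x = b := by unfold rAC; rw [if_neg hACx]
        have hBDx : crossCh b d x (M.f x) :=
          (hA x (M.f x) hxo hx.1 hx.2.1 hx.2.2.1 hx.2.2.2 hfx.1 hfx.2.1 hfx.2.2.1
            hfx.2.2.2 hcr).resolve_left hACx
        rw [hr, Finset.mem_erase]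
        have := memBD x hx.1 hx.2.1 hx.2.2.1 hx.2.2.2 hBDx
        exact ⟨this.2, this.1⟩
    · rw [he]
      have hfx := hGoodf x hx.1 hx.2.1 hx.2.2.1 hx.2.2.2
      by_cases hBDx : crossCh b d x (M.f x)
      · have hr : rBD M a b d x = b := by unfold rBD; rw [if_pos hBDx]
        rw [hr, Finset.mem_erase]
        have := memBD x hx.1 hx.2.1 hx.2.2.1 hx.2.2.2 hBDx
        exact ⟨this.2, this.1⟩
      · have hr : rBD M a b d x = a := by unfold rBD; rw [if_neg hBDx]
        have hACx : crossCh a c x (M.f x) :=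
          (hB x (M.f x) hxo hx.1 hx.2.1 hx.2.2.1 hx.2.2.2 hfx.1 hfx.2.1 hfx.2.2.1
            hfx.2.2.2 hcr).resolve_right hBDx
        rw [hr, Finset.mem_erase]
        have := memAC x hx.1 hx.2.1 hx.2.2.1 hx.2.2.2 hACx
        exact ⟨this.2, this.1⟩
  have coordGood : ∀ (r s x x' : Fin (2 * n)), (r = a ∨ r = b) → (s = a ∨ s = b) →
      (x ≠ a ∧ x ≠ b ∧ x ≠ c ∧ x ≠ d) → (x' ≠ a ∧ x' ≠ b ∧ x' ≠ c ∧ x' ≠ d) →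
      sort2 r x = sort2 s x' → x = x' := by
    intro r s x x' hr hs hx hx' he
    rcases sort2_cases r x with h | h <;> rcases sort2_cases s x' with h' | h' <;>
      rw [h, h'] at he <;> rw [Prod.ext_iff] at he
    · exact he.2
    · exfalso; rcases hs with hs | hs
      · exact hx.1 (he.2.trans hs)
      · exact hx.2.1 (he.2.trans hs)
    · exfalso; rcases hs with hs | hs
      · exact hx.1 (he.1.trans hs)
      · exact hx.2.1 (he.1.trans hs)
    · exact he.1
  have notGoodPair : ∀ (r x : Fin (2 * n)) (p : Fin (2 * n) × Fin (2 * n)), (r = a ∨ r = b) →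
      (p.1 ≠ a ∧ p.1 ≠ b ∧ p.1 ≠ c ∧ p.1 ≠ d) → (p.2 ≠ a ∧ p.2 ≠ b ∧ p.2 ≠ c ∧ p.2 ≠ d) →
      p ≠ sort2 r x := by
    intro r x p hr h1 h2 he
    rcases sort2_cases r x with h | h <;> rw [h] at he
    · rcases hr with hr | hr
      · exact h1.1 ((congrArg Prod.fst he).trans hr)
      · exact h1.2.1 ((congrArg Prod.fst he).trans hr)
    · rcases hr with hr | hr
      · exact h2.1 ((congrArg Prod.snd he).trans hr)
      · exact h2.2.1 ((congrArg Prod.snd he).trans hr)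
  have pdet : ∀ (u : Fin (2 * n)) (p q : Fin (2 * n) × Fin (2 * n)), p ∈ S' → q ∈ S' →
      ∀ x, (p = (u, x) ∨ p = (x, u)) → (q = (u, x) ∨ q = (x, u)) → p = q := by
    intro u p q hp hq x h h'
    rw [hS', Finset.mem_filter] at hp hq
    rcases h with h | h <;> rcases h' with h' | h'
    · rw [h, h']
    · exfalso; rw [h] at hp; rw [h'] at hq; exact lt_irrefl _ (hp.2.1.trans hq.2.1)
    · exfalso; rw [h] at hp; rw [h'] at hq; exact lt_irrefl _ (hp.2.1.trans hq.2.1)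
    · rw [h, h']
  have sortab : ∀ x : Fin (2 * n), (x ≠ a ∧ x ≠ b ∧ x ≠ c ∧ x ≠ d) →
      sort2 a x ≠ sort2 b x := by
    intro x hx he
    rcases sort2_cases a x with h | h <;> rcases sort2_cases b x with h' | h' <;>
      rw [h, h'] at he <;> rw [Prod.ext_iff] at he
    · exact hab.ne he.1
    · exact hx.1 he.1.symm
    · exact hx.2.1 he.1
    · exact hab.ne he.2
  have hinj : ∀ p ∈ S', ∀ q ∈ S', phi M a b c d u1 u2 p = phi M a b c d u1 u2 q → p = q := by
    intro p hp q hq hpq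
    rcases tri p hp with ⟨hP1, hP2, heP⟩ | ⟨x, hx, hxo, hcrP, hpeP, heP⟩ |
        ⟨x, hx, hxo, hcrP, hpeP, heP⟩ <;>
      rcases tri q hq with ⟨hQ1, hQ2, heQ⟩ | ⟨x', hx', hxo', hcrQ, hpeQ, heQ⟩ |
        ⟨x', hx', hxo', hcrQ, hpeQ, heQ⟩
    · rw [heP, heQ] at hpq; exact hpq
    · exfalso; rw [heP, heQ] at hpq
      exact notGoodPair _ x' p (rAC_mem M a b c x') hP1 hP2 hpq
    · exfalso; rw [heP, heQ] at hpq
      exact notGoodPair _ x' p (Or.symm (rBD_mem M a b d x')) hP1 hP2 hpq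
    · exfalso; rw [heP, heQ] at hpq
      exact notGoodPair _ x q (rAC_mem M a b c x) hQ1 hQ2 hpq.symm
    · rw [heP, heQ] at hpq
      have hxx : x = x' :=
        coordGood _ _ x x' (rAC_mem M a b c x) (rAC_mem M a b c x') hx hx' hpq
      exact pdet u1 p q hp hq x hpeP (hxx ▸ hpeQ)
    · exfalso; rw [heP, heQ] at hpq
      have hxx : x = x' :=
        coordGood _ _ x x' (rAC_mem M a b c x) (Or.symm (rBD_mem M a b d x')) hx hx' hpq
      subst hxx
      have hfx := hGoodf x hx.1 hx.2.1 hx.2.2.1 hx.2.2.2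
      obtain ⟨hACx, hBDx⟩ := hC x (M.f x) hxo hx.1 hx.2.1 hx.2.2.1 hx.2.2.2
        hfx.1 hfx.2.1 hfx.2.2.1 hfx.2.2.2 hcrP hcrQ
      have hr1 : rAC M a b c x = a := by unfold rAC; rw [if_pos hACx]
      have hr2 : rBD M a b d x = b := by unfold rBD; rw [if_pos hBDx]
      rw [hr1, hr2] at hpq
      exact sortab x hx hpq
    · exfalso; rw [heP, heQ] at hpq
      exact notGoodPair _ x q (Or.symm (rBD_mem M a b d x)) hQ1 hQ2 hpq.symm
    · exfalso; rw [heP, heQ] at hpq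
      have hxx : x = x' :=
        coordGood _ _ x x' (Or.symm (rBD_mem M a b d x)) (rAC_mem M a b c x') hx hx' hpq
      subst hxx
      have hfx := hGoodf x hx.1 hx.2.1 hx.2.2.1 hx.2.2.2
      obtain ⟨hACx, hBDx⟩ := hC x (M.f x) hxo hx.1 hx.2.1 hx.2.2.1 hx.2.2.2
        hfx.1 hfx.2.1 hfx.2.2.1 hfx.2.2.2 hcrQ hcrP
      have hr1 : rAC M a b c x = a := by unfold rAC; rw [if_pos hACx]
      have hr2 : rBD M a b d x = b := by unfold rBD; rw [if_pos hBDx]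
      rw [hr1, hr2] at hpq
      exact sortab x hx hpq.symm
    · rw [heP, heQ] at hpq
      have hxx : x = x' :=
        coordGood _ _ x x' (Or.symm (rBD_mem M a b d x)) (Or.symm (rBD_mem M a b d x')) hx hx' hpq
      exact pdet u2 p q hp hq x hpeP (hxx ▸ hpeQ)
  have habS : (a, b) ∈ S := by
    rw [hS, Finset.mem_filter]
    refine ⟨Finset.mem_univ _, hab, ?_, ?_⟩
    · show b < M.f a; rw [hMa]; exact hbc
    · show M.f a < M.f b; rw [hMa, hMb]; exact hcd
  calc S'.card ≤ (S.erase (a, b)).card := by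
        apply Finset.card_le_card_of_injOn (phi M a b c d u1 u2)
        · intro p hp; exact hmaps p hp
        · intro p hp q hq h
          exact hinj p (by simpa using hp) q (by simpa using hq) h
    _ < S.card := Finset.card_erase_lt_of_mem habS

lemma step_decrease (M M' : PM n) (h : UncrossStep M M') :
    crossings M' < crossings M := by
  obtain ⟨a, b, c, d, hab, hbc, hcd, hfa, hfb, hoth, hcase⟩ := h
  have hab' : (a : ℕ) < b := hab
  have hbc' : (b : ℕ) < c := hbc
  have hcd' : (c : ℕ) < d := hcd
  rcases hcase with ⟨h1, h2⟩ | ⟨h1, h2⟩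
  · refine crossings_decrease M M' a b c d a b c d hab hbc hcd hfa hfb
      (by tauto) hab hcd (hab.trans hbc) h1 h2 hoth ?_ ?_ ?_ ?_
    · unfold crossCh; simp only [Fin.lt_def]; omega
    all_goals
      intro x y hxy hxa hxb hxc hxd hya hyb hyc hyd
      unfold crossCh
      simp only [Fin.lt_def, ne_eq, Fin.ext_iff] at hxy hxa hxb hxc hxd hya hyb hyc hyd ⊢
      omega
  · refine crossings_decrease M M' a b c d a d b c hab hbc hcd hfa hfb
      (by tauto) (hab.trans (hbc.trans hcd)) hbc hab h1 h2 hoth ?_ ?_ ?_ ?_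
    · unfold crossCh; simp only [Fin.lt_def]; omega
    all_goals
      intro x y hxy hxa hxb hxc hxd hya hyb hyc hyd
      unfold crossCh
      simp only [Fin.lt_def, ne_eq, Fin.ext_iff] at hxy hxa hxb hxc hxd hya hyb hyc hyd ⊢
      omega

lemma exists_uncross (M : PM n) (h : ¬ Noncrossing M) : ∃ M', UncrossStep M M' := by
  rw [Noncrossing, not_not] at h
  obtain ⟨a, b, c, d, hab, hbc, hcd, hfa, hfb⟩ := h
  classical
  have hfc : M.f c = a := by rw [← hfa]; exact M.invol a
  have hfd : M.f d = b := by rw [← hfb]; exact M.invol b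
  have hdist : a ≠ b ∧ a ≠ c ∧ a ≠ d ∧ b ≠ c ∧ b ≠ d ∧ c ≠ d :=
    ⟨hab.ne, (hab.trans hbc).ne, (hab.trans (hbc.trans hcd)).ne, hbc.ne,
      (hbc.trans hcd).ne, hcd.ne⟩
  have hGoodf : ∀ k : Fin (2 * n), k ≠ a → k ≠ b → k ≠ c → k ≠ d →
      M.f k ≠ a ∧ M.f k ≠ b ∧ M.f k ≠ c ∧ M.f k ≠ d := by
    intro k ha hb hc hd
    refine ⟨?_, ?_, ?_, ?_⟩ <;> intro hh
    · have := M.invol k; rw [hh, hfa] at this; exact hc this.symm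
    · have := M.invol k; rw [hh, hfb] at this; exact hd this.symm
    · have := M.invol k; rw [hh, hfc] at this; exact ha this.symm
    · have := M.invol k; rw [hh, hfd] at this; exact hb this.symm
  set g : Fin (2 * n) → Fin (2 * n) := fun k =>
    if k = a then b else if k = b then a else if k = c then d else
      if k = d then c else M.f k with hg
  have hga : g a = b := by rw [hg]; simp
  have hgb : g b = a := by rw [hg]; simp [hdist.1.symm]
  have hgc : g c = d := by rw [hg]; simp [hdist.2.1.symm, hdist.2.2.2.1.symm]
  have hgd : g d = c := by rw [hg]; simp [hdist.2.2.1.symm, hdist.2.2.2.2.1.symm, hdist.2.2.2.2.2.symm]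
  have hgoth : ∀ k, k ≠ a → k ≠ b → k ≠ c → k ≠ d → g k = M.f k := by
    intro k h1 h2 h3 h4; rw [hg]; simp [h1, h2, h3, h4]
  have hinvol : ∀ i, g (g i) = i := by
    intro i
    by_cases ha : i = a; · rw [ha, hga, hgb]
    by_cases hb : i = b; · rw [hb, hgb, hga]
    by_cases hc : i = c; · rw [hc, hgc, hgd]
    by_cases hd : i = d; · rw [hd, hgd, hgc]
    have hf := hGoodf i ha hb hc hd
    rw [hgoth i ha hb hc hd, hgoth (M.f i) hf.1 hf.2.1 hf.2.2.1 hf.2.2.2]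
    exact M.invol i
  have hnofix : ∀ i, g i ≠ i := by
    intro i
    by_cases ha : i = a; · rw [ha, hga]; exact hdist.1.symm
    by_cases hb : i = b; · rw [hb, hgb]; exact hdist.1
    by_cases hc : i = c; · rw [hc, hgc]; exact hdist.2.2.2.2.2.symm
    by_cases hd : i = d; · rw [hd, hgd]; exact hdist.2.2.2.2.2
    rw [hgoth i ha hb hc hd]; exact M.nofix i
  refine ⟨⟨g, hinvol, hnofix⟩, a, b, c, d, hab, hbc, hcd, hfa, hfb, ?_, Or.inl ⟨hga, hgc⟩⟩
  intro k h1 h2 h3 h4; exact hgoth k h1 h2 h3 h4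

lemma terminates (M : PM n) :
    ∃ M' : PM n, Relation.ReflTransGen UncrossStep M M' ∧ Noncrossing M' := by
  have H : ∀ N : ℕ, ∀ M : PM n, crossings M ≤ N →
      ∃ M' : PM n, Relation.ReflTransGen UncrossStep M M' ∧ Noncrossing M' := by
    intro N
    induction N with
    | zero =>
      intro M hM
      by_cases h : Noncrossing M
      · exact ⟨M, Relation.ReflTransGen.refl, h⟩
      · obtain ⟨M1, s⟩ := exists_uncross M h
        have := step_decrease M M1 s
        omega
    | succ N ih =>
      intro M hM
      by_cases h : Noncrossing M
      · exact ⟨M, Relation.ReflTransGen.refl, h⟩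
      · obtain ⟨M1, s⟩ := exists_uncross M h
        have hlt := step_decrease M M1 s
        obtain ⟨M', r, hn⟩ := ih M1 (by omega)
        exact ⟨M', Relation.ReflTransGen.head s r, hn⟩
  exact H (crossings M) M le_rfl

end Aux

theorem uncrossing_terminates (n : ℕ) :
    (∀ M M' : PM n, UncrossStep M M' → crossings M' < crossings M) ∧
    (∀ M : PM n, ∃ M' : PM n, Relation.ReflTransGen UncrossStep M M' ∧ Noncrossing M') := by
  exact ⟨fun M M' h => step_decrease M M' h, fun M => terminates M⟩
end
end

section
/- Replacing a crossing pair {a,c},{b,d} (a<b<c<d) of a perfect matching M by {a,b},{c,d} strictly decreases the number of crossing pairs of the matching; the same holds for the replacement by {a,d},{b,c}. -/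
open MvPolynomial Finset

noncomputable section

/-- The set of crossing pairs of a matching. -/
def crossSet {n : ℕ} (M : PM n) : Finset (Fin (2 * n) × Fin (2 * n)) :=
  (Finset.univ : Finset (Fin (2 * n) × Fin (2 * n))).filter
    (fun p => p.1 < p.2 ∧ p.2 < M.f p.1 ∧ M.f p.1 < M.f p.2)

/-- Injection used for the uncrossing {a,b},{c,d}. -/
def psi1 {n : ℕ} (M : PM n) (a b c d : Fin (2 * n)) (x : Fin (2 * n) × Fin (2 * n)) :
    Fin (2 * n) × Fin (2 * n) :=
  if x.1 = a then (if M.f x.2 < d then (x.2, b) else (a, x.2))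
  else if x.2 = a then (x.1, a)
  else if x.1 = c then (b, x.2)
  else if x.2 = c then (if x.1 < a then (x.1, b) else (a, x.1))
  else x

/-- Injection used for the uncrossing {a,d},{b,c}. -/
def psi2 {n : ℕ} (M : PM n) (a b c d : Fin (2 * n)) (x : Fin (2 * n) × Fin (2 * n)) :
    Fin (2 * n) × Fin (2 * n) :=
  if x.1 = a then (if x.2 < c then (a, x.2) else (b, x.2))
  else if x.2 = a then (if M.f x.1 < c then (x.1, a) else (x.1, b))
  else if x.1 = b then (if M.f x.2 < d then (a, x.2) else (b, x.2))
  else if x.2 = b then (x.1, b)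
  else x

theorem uncross_decreases_crossings (n : ℕ) (M : PM n) (a b c d : Fin (2 * n))
    (hab : a < b) (hbc : b < c) (hcd : c < d)
    (hac : M.f a = c) (hbd : M.f b = d) :
    (∀ M' : PM n, M'.f a = b → M'.f c = d →
      (∀ k, k ≠ a → k ≠ b → k ≠ c → k ≠ d → M'.f k = M.f k) →
      crossings M' < crossings M) ∧
    (∀ M'' : PM n, M''.f a = d → M''.f b = c →
      (∀ k, k ≠ a → k ≠ b → k ≠ c → k ≠ d → M''.f k = M.f k) →
      crossings M'' < crossings M) := by
  have hMc : M.f c = a := by rw [← hac, M.invol]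
  have hMd : M.f d = b := by rw [← hbd, M.invol]
  have vab : a.val < b.val := hab
  have vbc : b.val < c.val := hbc
  have vcd : c.val < d.val := hcd
  have vne : ∀ {x y : Fin (2 * n)}, x ≠ y → x.val ≠ y.val :=
    fun h e => h (Fin.ext e)
  have key : ∀ (N : PM n) (ψ : Fin (2 * n) × Fin (2 * n) → Fin (2 * n) × Fin (2 * n)),
      (∀ x ∈ crossSet N, ψ x ∈ (crossSet M).erase (a, b)) →
      Set.InjOn ψ (crossSet N) →
      crossings N < crossings M := by
    intro N ψ hm hi
    have hmem : (a, b) ∈ crossSet M := by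
      simp only [crossSet, Finset.mem_filter, Finset.mem_univ, true_and, hac, hbd]
      exact ⟨hab, hbc, hcd⟩
    calc crossings N = (crossSet N).card := rfl
      _ ≤ ((crossSet M).erase (a, b)).card := Finset.card_le_card_of_injOn ψ hm hi
      _ < (crossSet M).card := Finset.card_erase_lt_of_mem hmem
      _ = crossings M := rfl
  constructor
  · -- first uncrossing: {a,b},{c,d}
    intro M' hfa hfc hfix
    have h1b : M'.f b = a := by rw [← hfa, M'.invol]
    have h1d : M'.f d = c := by rw [← hfc, M'.invol]
    have classify : ∀ x ∈ crossSet M',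
        (∃ q, x = (a, q) ∧ psi1 M a b c d x = (q, b) ∧
          (a.val < q.val ∧ q.val < b.val ∧ b.val < (M.f q).val ∧ (M.f q).val < d.val)) ∨
        (∃ q, x = (a, q) ∧ psi1 M a b c d x = (a, q) ∧
          (a.val < q.val ∧ q.val < b.val ∧ d.val < (M.f q).val)) ∨
        (∃ p, x = (p, a) ∧ psi1 M a b c d x = (p, a) ∧
          (p.val < a.val ∧ a.val < (M.f p).val ∧ (M.f p).val < b.val)) ∨
        (∃ q, x = (c, q) ∧ psi1 M a b c d x = (b, q) ∧
          (c.val < q.val ∧ q.val < d.val ∧ d.val < (M.f q).val)) ∨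
        (∃ p, x = (p, c) ∧ psi1 M a b c d x = (p, b) ∧
          (p.val < a.val ∧ c.val < (M.f p).val ∧ (M.f p).val < d.val)) ∨
        (∃ p, x = (p, c) ∧ psi1 M a b c d x = (a, p) ∧
          (a.val < p.val ∧ p.val ≠ b.val ∧ p.val < c.val ∧ c.val < (M.f p).val ∧ (M.f p).val < d.val)) ∨
        (∃ p q, x = (p, q) ∧ psi1 M a b c d x = (p, q) ∧
          (p.val < q.val ∧ q.val < (M.f p).val ∧ (M.f p).val < (M.f q).val ∧
           p.val ≠ a.val ∧ p.val ≠ b.val ∧ p.val ≠ c.val ∧ p.val ≠ d.val ∧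
           q.val ≠ a.val ∧ q.val ≠ b.val ∧ q.val ≠ c.val ∧ q.val ≠ d.val)) := by
      rintro ⟨p, q⟩ hx
      simp only [crossSet, Finset.mem_filter, Finset.mem_univ, true_and] at hx
      obtain ⟨hpq, hq2, hq3⟩ := hx
      by_cases hpa : p = a
      · replace hpa := hpa.symm; subst hpa
        rw [hfa] at hq2 hq3
        have hqa : q ≠ a := ne_of_gt hpq
        have hqb : q ≠ b := ne_of_lt hq2
        have hqc : q ≠ c := ne_of_lt (hq2.trans hbc)
        have hqd : q ≠ d := ne_of_lt ((hq2.trans hbc).trans hcd)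
        rw [hfix q hqa hqb hqc hqd] at hq3
        have hMqd : M.f q ≠ d := fun h => hqb (by rw [← M.invol q, h, hMd])
        by_cases hlt : M.f q < d
        · exact Or.inl ⟨q, rfl, by simp [psi1, hlt], hpq, hq2, hq3, hlt⟩
        · have hdq : d < M.f q := lt_of_le_of_ne (not_lt.mp hlt) (Ne.symm hMqd)
          exact Or.inr (Or.inl ⟨q, rfl, by simp [psi1, hlt], hpq, hq2, hdq⟩)
      · by_cases hqa : q = a
        · replace hqa := hqa.symm; subst hqa
          have hpb : p ≠ b := ne_of_lt (hpq.trans hab)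
          have hpc : p ≠ c := ne_of_lt (hpq.trans (hab.trans hbc))
          have hpd : p ≠ d := ne_of_lt (hpq.trans ((hab.trans hbc).trans hcd))
          rw [hfa] at hq3
          rw [hfix p hpa hpb hpc hpd] at hq2 hq3
          exact Or.inr (Or.inr (Or.inl ⟨p, rfl, by simp [psi1, hpa], hpq, hq2, hq3⟩))
        · by_cases hpc : p = c
          · replace hpc := hpc.symm; subst hpc
            rw [hfc] at hq2 hq3
            have hqb : q ≠ b := ne_of_gt (hbc.trans hpq)
            have hqc : q ≠ c := ne_of_gt hpq
            have hqd : q ≠ d := ne_of_lt hq2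
            rw [hfix q hqa hqb hqc hqd] at hq3
            have hca : c ≠ a := ne_of_gt (hab.trans hbc)
            exact Or.inr (Or.inr (Or.inr (Or.inl
              ⟨q, rfl, by simp [psi1, hca, hqa], hpq, hq2, hq3⟩)))
          · by_cases hqc : q = c
            · replace hqc := hqc.symm; subst hqc
              rw [hfc] at hq3
              have hpb : p ≠ b := by
                rintro rfl
                rw [h1b] at hq2
                exact absurd hq2 (asymm (hab.trans hbc))
              have hpc' : p ≠ c := ne_of_lt hpq
              have hpd : p ≠ d := ne_of_lt (hpq.trans hcd)
              rw [hfix p hpa hpb hpc' hpd] at hq2 hq3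
              have hca : c ≠ a := ne_of_gt (hab.trans hbc)
              by_cases hplt : p < a
              · exact Or.inr (Or.inr (Or.inr (Or.inr (Or.inl
                  ⟨p, rfl, by simp [psi1, hpa, hca, hpc', hplt], hplt, hq2, hq3⟩))))
              · have hap : a < p :=
                  lt_of_le_of_ne (not_lt.mp hplt) (fun h => hpa h.symm)
                exact Or.inr (Or.inr (Or.inr (Or.inr (Or.inr (Or.inl
                  ⟨p, rfl, by simp [psi1, hpa, hca, hpc', hplt],
                    hap, vne hpb, hpq, hq2, hq3⟩)))))
            · have hpb : p ≠ b := by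
                rintro rfl
                rw [h1b] at hq2
                exact absurd (hpq.trans hq2) (asymm hab)
              have hpd : p ≠ d := by
                rintro rfl
                rw [h1d] at hq2
                exact absurd (hpq.trans hq2) (asymm hcd)
              have hqb : q ≠ b := by
                rintro rfl
                rw [h1b] at hq3
                exact absurd (hq2.trans hq3) (asymm hab)
              have hqd : q ≠ d := by
                rintro rfl
                rw [h1d] at hq3
                exact absurd (hq2.trans hq3) (asymm hcd)
              rw [hfix p hpa hpb hpc hpd] at hq2 hq3
              rw [hfix q hqa hqb hqc hqd] at hq3
              exact Or.inr (Or.inr (Or.inr (Or.inr (Or.inr (Or.inr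
                ⟨p, q, rfl, by simp [psi1, hpa, hqa, hpc, hqc],
                  hpq, hq2, hq3, vne hpa, vne hpb, vne hpc, vne hpd,
                  vne hqa, vne hqb, vne hqc, vne hqd⟩)))))
    refine key M' (psi1 M a b c d) ?_ ?_
    · intro x hx
      rcases classify x hx with ⟨u, rfl, heq, hf⟩ | ⟨u, rfl, heq, hf⟩ | ⟨u, rfl, heq, hf⟩ |
        ⟨u, rfl, heq, hf⟩ | ⟨u, rfl, heq, hf⟩ | ⟨u, rfl, heq, hf⟩ | ⟨u, v, rfl, heq, hf⟩ <;>
      · rw [heq, Finset.mem_erase]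
        refine ⟨fun h => ?_, ?_⟩
        · rw [Prod.mk.injEq] at h
          have e1 := congrArg Fin.val h.1
          have e2 := congrArg Fin.val h.2
          omega
        · simp only [crossSet, Finset.mem_filter, Finset.mem_univ, true_and, hac, hbd,
            Fin.lt_def]
          omega
    · intro x hx x' hx' hψ
      rcases classify x (Finset.mem_coe.mp hx) with ⟨u, rfl, heq, hf⟩ | ⟨u, rfl, heq, hf⟩ |
        ⟨u, rfl, heq, hf⟩ | ⟨u, rfl, heq, hf⟩ | ⟨u, rfl, heq, hf⟩ | ⟨u, rfl, heq, hf⟩ |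
        ⟨u, v, rfl, heq, hf⟩ <;>
      rcases classify x' (Finset.mem_coe.mp hx') with ⟨w, rfl, heq', hf'⟩ | ⟨w, rfl, heq', hf'⟩ |
        ⟨w, rfl, heq', hf'⟩ | ⟨w, rfl, heq', hf'⟩ | ⟨w, rfl, heq', hf'⟩ | ⟨w, rfl, heq', hf'⟩ |
        ⟨w, z, rfl, heq', hf'⟩ <;>
      · rw [heq, heq', Prod.mk.injEq] at hψ
        obtain ⟨e1, e2⟩ := hψ
        try subst e1
        try subst e2
        first
        | rfl
        | (simp only [Prod.mk.injEq, Fin.ext_iff]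
           try omega)
  · -- second uncrossing: {a,d},{b,c}
    intro M'' hfa hfb hfix
    have h2d : M''.f d = a := by rw [← hfa, M''.invol]
    have h2c : M''.f c = b := by rw [← hfb, M''.invol]
    have hba : b ≠ a := ne_of_gt hab
    have classify : ∀ x ∈ crossSet M'',
        (∃ q, x = (a, q) ∧ psi2 M a b c d x = (a, q) ∧
          (a.val < q.val ∧ q.val < c.val ∧ q.val ≠ b.val ∧ d.val < (M.f q).val)) ∨
        (∃ q, x = (a, q) ∧ psi2 M a b c d x = (b, q) ∧
          (c.val < q.val ∧ q.val < d.val ∧ d.val < (M.f q).val)) ∨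
        (∃ p, x = (p, a) ∧ psi2 M a b c d x = (p, a) ∧
          (p.val < a.val ∧ a.val < (M.f p).val ∧ (M.f p).val < c.val)) ∨
        (∃ p, x = (p, a) ∧ psi2 M a b c d x = (p, b) ∧
          (p.val < a.val ∧ c.val < (M.f p).val ∧ (M.f p).val < d.val)) ∨
        (∃ q, x = (b, q) ∧ psi2 M a b c d x = (a, q) ∧
          (b.val < q.val ∧ q.val < c.val ∧ c.val < (M.f q).val ∧ (M.f q).val < d.val)) ∨
        (∃ q, x = (b, q) ∧ psi2 M a b c d x = (b, q) ∧
          (b.val < q.val ∧ q.val < c.val ∧ d.val < (M.f q).val)) ∨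
        (∃ p, x = (p, b) ∧ psi2 M a b c d x = (p, b) ∧
          (p.val < b.val ∧ p.val ≠ a.val ∧ b.val < (M.f p).val ∧ (M.f p).val < c.val)) ∨
        (∃ p q, x = (p, q) ∧ psi2 M a b c d x = (p, q) ∧
          (p.val < q.val ∧ q.val < (M.f p).val ∧ (M.f p).val < (M.f q).val ∧
           p.val ≠ a.val ∧ p.val ≠ b.val ∧ p.val ≠ c.val ∧ p.val ≠ d.val ∧
           q.val ≠ a.val ∧ q.val ≠ b.val ∧ q.val ≠ c.val ∧ q.val ≠ d.val)) := by
      rintro ⟨p, q⟩ hx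
      simp only [crossSet, Finset.mem_filter, Finset.mem_univ, true_and] at hx
      obtain ⟨hpq, hq2, hq3⟩ := hx
      by_cases hpa : p = a
      · replace hpa := hpa.symm; subst hpa
        rw [hfa] at hq2 hq3
        have hqa : q ≠ a := ne_of_gt hpq
        have hqd : q ≠ d := ne_of_lt hq2
        have hqb : q ≠ b := by
          rintro rfl
          rw [hfb] at hq3
          exact absurd hq3 (asymm hcd)
        have hqc : q ≠ c := by
          rintro rfl
          rw [h2c] at hq3
          exact absurd hq3 (asymm (hbc.trans hcd))
        rw [hfix q hqa hqb hqc hqd] at hq3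
        by_cases hqlt : q < c
        · exact Or.inl ⟨q, rfl, by simp [psi2, hqlt], hpq, hqlt, vne hqb, hq3⟩
        · have hcq : c < q := lt_of_le_of_ne (not_lt.mp hqlt) (Ne.symm hqc)
          exact Or.inr (Or.inl ⟨q, rfl, by simp [psi2, hqlt], hcq, hq2, hq3⟩)
      · by_cases hqa : q = a
        · replace hqa := hqa.symm; subst hqa
          have hpb : p ≠ b := ne_of_lt (hpq.trans hab)
          have hpc : p ≠ c := ne_of_lt (hpq.trans (hab.trans hbc))
          have hpd : p ≠ d := ne_of_lt (hpq.trans ((hab.trans hbc).trans hcd))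
          rw [hfa] at hq3
          rw [hfix p hpa hpb hpc hpd] at hq2 hq3
          have hMpc : M.f p ≠ c := fun h => hpa (by rw [← M.invol p, h, hMc])
          by_cases hplt : M.f p < c
          · exact Or.inr (Or.inr (Or.inl ⟨p, rfl, by simp [psi2, hpa, hplt], hpq, hq2, hplt⟩))
          · have hcp : c < M.f p := lt_of_le_of_ne (not_lt.mp hplt) (Ne.symm hMpc)
            exact Or.inr (Or.inr (Or.inr (Or.inl
              ⟨p, rfl, by simp [psi2, hpa, hplt], hpq, hcp, hq3⟩)))
        · by_cases hpb : p = b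
          · replace hpb := hpb.symm; subst hpb
            rw [hfb] at hq2 hq3
            have hqa' : q ≠ a := ne_of_gt (hab.trans hpq)
            have hqb : q ≠ b := ne_of_gt hpq
            have hqc : q ≠ c := ne_of_lt hq2
            have hqd : q ≠ d := ne_of_lt (hq2.trans hcd)
            rw [hfix q hqa' hqb hqc hqd] at hq3
            have hMqd : M.f q ≠ d := fun h => hqb (by rw [← M.invol q, h, hMd])
            by_cases hqlt : M.f q < d
            · exact Or.inr (Or.inr (Or.inr (Or.inr (Or.inl
                ⟨q, rfl, by simp [psi2, hba, hqa', hqlt], hpq, hq2, hq3, hqlt⟩))))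
            · have hdq : d < M.f q := lt_of_le_of_ne (not_lt.mp hqlt) (Ne.symm hMqd)
              exact Or.inr (Or.inr (Or.inr (Or.inr (Or.inr (Or.inl
                ⟨q, rfl, by simp [psi2, hba, hqa', hqlt], hpq, hq2, hdq⟩)))))
          · by_cases hqb : q = b
            · replace hqb := hqb.symm; subst hqb
              rw [hfb] at hq3
              have hpc : p ≠ c := ne_of_lt (hpq.trans hbc)
              have hpd : p ≠ d := ne_of_lt ((hpq.trans hbc).trans hcd)
              rw [hfix p hpa hpb hpc hpd] at hq2 hq3
              exact Or.inr (Or.inr (Or.inr (Or.inr (Or.inr (Or.inr (Or.inl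
                ⟨p, rfl, by simp [psi2, hpa, hba, hpb], hpq, vne hpa, hq2, hq3⟩))))))
            · have hpc : p ≠ c := by
                rintro rfl
                rw [h2c] at hq2
                exact absurd (hpq.trans hq2) (asymm hbc)
              have hpd : p ≠ d := by
                rintro rfl
                rw [h2d] at hq2
                exact absurd (hpq.trans hq2) (asymm ((hab.trans hbc).trans hcd))
              have hqc : q ≠ c := by
                rintro rfl
                rw [h2c] at hq3
                exact absurd (hq2.trans hq3) (asymm hbc)
              have hqd : q ≠ d := by
                rintro rfl
                rw [h2d] at hq3
                exact absurd (hq2.trans hq3) (asymm ((hab.trans hbc).trans hcd))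
              rw [hfix p hpa hpb hpc hpd] at hq2 hq3
              rw [hfix q hqa hqb hqc hqd] at hq3
              exact Or.inr (Or.inr (Or.inr (Or.inr (Or.inr (Or.inr (Or.inr
                ⟨p, q, rfl, by simp [psi2, hpa, hqa, hpb, hqb],
                  hpq, hq2, hq3, vne hpa, vne hpb, vne hpc, vne hpd,
                  vne hqa, vne hqb, vne hqc, vne hqd⟩))))))
    refine key M'' (psi2 M a b c d) ?_ ?_
    · intro x hx
      rcases classify x hx with ⟨u, rfl, heq, hf⟩ | ⟨u, rfl, heq, hf⟩ | ⟨u, rfl, heq, hf⟩ |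
        ⟨u, rfl, heq, hf⟩ | ⟨u, rfl, heq, hf⟩ | ⟨u, rfl, heq, hf⟩ | ⟨u, rfl, heq, hf⟩ |
        ⟨u, v, rfl, heq, hf⟩ <;>
      · rw [heq, Finset.mem_erase]
        refine ⟨fun h => ?_, ?_⟩
        · rw [Prod.mk.injEq] at h
          have e1 := congrArg Fin.val h.1
          have e2 := congrArg Fin.val h.2
          omega
        · simp only [crossSet, Finset.mem_filter, Finset.mem_univ, true_and, hac, hbd,
            Fin.lt_def]
          omega
    · intro x hx x' hx' hψ
      rcases classify x (Finset.mem_coe.mp hx) with ⟨u, rfl, heq, hf⟩ | ⟨u, rfl, heq, hf⟩ |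
        ⟨u, rfl, heq, hf⟩ | ⟨u, rfl, heq, hf⟩ | ⟨u, rfl, heq, hf⟩ | ⟨u, rfl, heq, hf⟩ |
        ⟨u, rfl, heq, hf⟩ | ⟨u, v, rfl, heq, hf⟩ <;>
      rcases classify x' (Finset.mem_coe.mp hx') with ⟨w, rfl, heq', hf'⟩ | ⟨w, rfl, heq', hf'⟩ |
        ⟨w, rfl, heq', hf'⟩ | ⟨w, rfl, heq', hf'⟩ | ⟨w, rfl, heq', hf'⟩ | ⟨w, rfl, heq', hf'⟩ |
        ⟨w, rfl, heq', hf'⟩ | ⟨w, z, rfl, heq', hf'⟩ <;>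
      · rw [heq, heq', Prod.mk.injEq] at hψ
        obtain ⟨e1, e2⟩ := hψ
        try subst e1
        try subst e2
        first
        | rfl
        | (simp only [Prod.mk.injEq, Fin.ext_iff]
           try omega)
end
end
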